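/- arXiv:2206.04986 — 4 statements merged into one kernel-verified Lean document; each statement's English description precedes it below -/
import Mathlib

section
/- Among all Lipschitz curves γ : [t₁,t₂] → ℝ with γ(t₁)=x₁ and γ(t₂)=x₂, the weighted action ∫_{t₁}^{t₂} f*(γ'(θ)) e^{−β(θ)} dθ is minimized by the h-curve X satisfying X'(θ) = f'(y₀ e^{β(θ)}) with X(t₁)=x₁, X(t₂)=x₂. That is, for every such γ, ∫_{t₁}^{t₂} f*(γ'(θ))e^{−β(θ)}dθ ≥ ∫_{t₁}^{t₂} f*(X'(θ))e^{−β(θ)}dθ. -/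
open Real Set Filter intervalIntegral

open MeasureTheory Topology

lemma bddm {h : ℝ → ℝ} {M : ℝ} (a b : ℝ) (hm : Measurable h) (hb : ∀ x, |h x| ≤ M) :
    IntervalIntegrable h volume a b := by
  rw [intervalIntegrable_iff]
  refine Integrable.mono' (g := fun _ => M) ?_ hm.aestronglyMeasurable
    (ae_of_all _ fun x => by simpa [Real.norm_eq_abs] using hb x)
  exact integrableOn_const (by simp [Set.uIoc])
lemma lip_ftc (g : ℝ → ℝ) (K : NNReal) (hg : LipschitzWith K g) (a b : ℝ) (hab : a ≤ b) :
    ∫ x in a..b, deriv g x = g b - g a := by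
  have cont : Continuous g := hg.continuous
  set F : ℕ → ℝ → ℝ := fun n x => ((n : ℝ) + 1) * (g (x + 1 / ((n : ℝ) + 1)) - g x) with hF
  have hd : ∀ n : ℕ, (0:ℝ) < 1 / ((n : ℝ) + 1) := fun n => by positivity
  -- step B
  have stepB : ∀ c : ℝ, Tendsto (fun n : ℕ => ((n : ℝ) + 1) * ∫ x in c..(c + 1 / ((n : ℝ) + 1)), g x)
      atTop (𝓝 (g c)) := by
    intro c
    have hder : HasDerivAt (fun t => ∫ x in c..t, g x) (g c) c :=
      intervalIntegral.integral_hasDerivAt_right (cont.intervalIntegrable _ _)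
        ⟨univ, univ_mem, cont.aestronglyMeasurable.restrict⟩ cont.continuousAt
    rw [hasDerivAt_iff_tendsto_slope] at hder
    have hseq : Tendsto (fun n : ℕ => c + 1 / ((n : ℝ) + 1)) atTop (𝓝[≠] c) := by
      apply tendsto_nhdsWithin_of_tendsto_nhds_of_eventually_within
      · have := tendsto_one_div_add_atTop_nhds_zero_nat (𝕜 := ℝ)
        simpa using (tendsto_const_nhds (x := c)).add this
      · exact Eventually.of_forall fun n => by
          simp only [mem_compl_iff, mem_singleton_iff]
          have := hd n; intro hc; nlinarith
    have := hder.comp hseq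
    convert this using 2 with n
    simp only [Function.comp_apply, slope_def_field]
    rw [intervalIntegral.integral_same]
    field_simp
    ring
  -- step A
  have stepA : ∀ n : ℕ, ∫ x in a..b, F n x =
      ((n:ℝ)+1) * (∫ x in b..(b + 1/((n:ℝ)+1)), g x) - ((n:ℝ)+1) * (∫ x in a..(a + 1/((n:ℝ)+1)), g x) := by
    intro n
    have ig : ∀ u v : ℝ, IntervalIntegrable g volume u v := fun u v => cont.intervalIntegrable u v
    have igd : IntervalIntegrable (fun x => g (x + 1/((n:ℝ)+1))) volume a b :=
      (cont.comp (continuous_id.add continuous_const)).intervalIntegrable a b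
    have h1 : (∫ x in a..b, F n x) = ((n:ℝ)+1) * ∫ x in a..b, (g (x + 1/((n:ℝ)+1)) - g x) :=
      intervalIntegral.integral_const_mul _ _
    rw [h1, intervalIntegral.integral_sub igd (ig a b),
      intervalIntegral.integral_comp_add_right g (1/((n:ℝ)+1))]
    have C1 : (∫ x in (a + 1/((n:ℝ)+1))..b, g x) + ∫ x in b..(b + 1/((n:ℝ)+1)), g x
        = ∫ x in (a + 1/((n:ℝ)+1))..(b + 1/((n:ℝ)+1)), g x :=
      intervalIntegral.integral_add_adjacent_intervals (ig _ _) (ig _ _)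
    have C2 : (∫ x in a..(a + 1/((n:ℝ)+1)), g x) + ∫ x in (a + 1/((n:ℝ)+1))..b, g x
        = ∫ x in a..b, g x :=
      intervalIntegral.integral_add_adjacent_intervals (ig _ _) (ig _ _)
    nlinarith [C1, C2]
  -- step C : a.e. convergence
  have stepC : ∀ᵐ x ∂(volume.restrict (Ioc a b)), Tendsto (fun n => F n x) atTop (𝓝 (deriv g x)) := by
    refine ae_restrict_of_ae ?_
    filter_upwards [hg.ae_differentiableAt] with x hx
    have hder := hx.hasDerivAt
    rw [hasDerivAt_iff_tendsto_slope] at hder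
    have hseq : Tendsto (fun n : ℕ => x + 1 / ((n : ℝ) + 1)) atTop (𝓝[≠] x) := by
      apply tendsto_nhdsWithin_of_tendsto_nhds_of_eventually_within
      · have := tendsto_one_div_add_atTop_nhds_zero_nat (𝕜 := ℝ)
        simpa using (tendsto_const_nhds (x := x)).add this
      · exact Eventually.of_forall fun n => by
          simp only [mem_compl_iff, mem_singleton_iff]
          have := hd n; intro hc; nlinarith
    have := hder.comp hseq
    convert this using 2 with n
    simp only [Function.comp_apply, slope_def_field, hF]
    field_simp
    ring
  -- step D : dominated convergence
  have meas : ∀ n : ℕ, AEStronglyMeasurable (F n) (volume.restrict (Ioc a b)) := by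
    intro n
    exact ((continuous_const.mul ((cont.comp (continuous_id.add continuous_const)).sub
      cont)).aestronglyMeasurable).restrict
  have hbound : ∀ n : ℕ, ∀ᵐ x ∂(volume.restrict (Ioc a b)), ‖F n x‖ ≤ (K : ℝ) := by
    intro n
    refine ae_of_all _ fun x => ?_
    have h2 : |g (x + 1/((n:ℝ)+1)) - g x| ≤ (K:ℝ) * (1/((n:ℝ)+1)) := by
      have := hg.dist_le_mul (x + 1/((n:ℝ)+1)) x
      rwa [Real.dist_eq, Real.dist_eq, add_sub_cancel_left, abs_of_pos (hd n)] at this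
    have h3 : ‖F n x‖ = ((n:ℝ)+1) * |g (x + 1/((n:ℝ)+1)) - g x| := by
      rw [Real.norm_eq_abs, hF, abs_mul, abs_of_pos (by positivity : (0:ℝ) < (n:ℝ)+1)]
    rw [h3]
    calc ((n:ℝ)+1) * |g (x + 1/((n:ℝ)+1)) - g x| ≤ ((n:ℝ)+1) * ((K:ℝ) * (1/((n:ℝ)+1))) := by
          exact mul_le_mul_of_nonneg_left h2 (by positivity)
      _ = (K:ℝ) := by field_simp
  have hbi : Integrable (fun _ : ℝ => (K:ℝ)) (volume.restrict (Ioc a b)) :=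
    integrableOn_const (by simp)
  have stepD := MeasureTheory.tendsto_integral_of_dominated_convergence _ meas hbi hbound stepC
  -- combine
  have e1 : ∀ n : ℕ, (∫ x, F n x ∂(volume.restrict (Ioc a b))) = ∫ x in a..b, F n x := by
    intro n; rw [intervalIntegral.integral_of_le hab]
  have lim1 : Tendsto (fun n : ℕ => ∫ x in a..b, F n x) atTop (𝓝 (∫ x, deriv g x ∂(volume.restrict (Ioc a b)))) := by
    simpa only [e1] using stepD
  have lim2 : Tendsto (fun n : ℕ => ∫ x in a..b, F n x) atTop (𝓝 (g b - g a)) := by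
    simp only [stepA]
    exact (stepB b).sub (stepB a)
  have := tendsto_nhds_unique lim1 lim2
  rw [intervalIntegral.integral_of_le hab]
  exact this
/-- Convex conjugate of `f`. -/
noncomputable def conjFn (f : ℝ → ℝ) (u : ℝ) : ℝ := ⨆ v : ℝ, (u * v - f v)

lemma conj_bdd {f : ℝ → ℝ} (hfc : Continuous f)
    (hsuper : Tendsto (fun u => f u / |u|) (cocompact ℝ) atTop) (u : ℝ) :
    BddAbove (Set.range fun v => u * v - f v) := by
  have h := hsuper.eventually (eventually_ge_atTop (|u| + 1))
  rw [(Filter.hasBasis_cocompact).eventually_iff] at h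
  obtain ⟨s, hs, hsub⟩ := h
  obtain ⟨M, hM⟩ := (hs.image ((continuous_const.mul continuous_id).sub hfc)).bddAbove
  refine ⟨max M 0, ?_⟩
  rintro x ⟨v, rfl⟩
  by_cases hv : v ∈ s
  · exact le_max_of_le_left (hM ⟨v, hv, rfl⟩)
  · have h1 : |u| + 1 ≤ f v / |v| := hsub hv
    have hv0 : v ≠ 0 := by
      rintro rfl; simp at h1; nlinarith [abs_nonneg u]
    have h2 : (|u| + 1) * |v| ≤ f v := (le_div_iff₀ (abs_pos.2 hv0)).1 h1
    have h3 : u * v ≤ |u| * |v| := (le_abs_self _).trans (abs_mul u v).le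
    have := abs_pos.2 hv0
    refine le_max_of_le_right ?_
    show u * v - f v ≤ 0
    nlinarith
lemma conj_ge {f : ℝ → ℝ} (hfc : Continuous f)
    (hsuper : Tendsto (fun u => f u / |u|) (cocompact ℝ) atTop) (u v : ℝ) :
    u * v - f v ≤ conjFn f u :=
  le_ciSup (conj_bdd hfc hsuper u) v

lemma conj_eq {f : ℝ → ℝ} (hfc : Continuous f) (hconv : ConvexOn ℝ Set.univ f)
    (hdiff : ∀ x, DifferentiableAt ℝ f x)
    (hsuper : Tendsto (fun u => f u / |u|) (cocompact ℝ) atTop) (v : ℝ) :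
    conjFn f (deriv f v) = deriv f v * v - f v := by
  refine le_antisymm (ciSup_le fun w => ?_) (conj_ge hfc hsuper _ v)
  rcases lt_trichotomy w v with h | h | h
  · have := hconv.slope_le_deriv (mem_univ w) (mem_univ v) h (hdiff v)
    rw [slope_def_field] at this
    have hvw : (0:ℝ) < v - w := by linarith
    rw [div_le_iff₀ hvw] at this
    nlinarith
  · subst h; simp
  · have := hconv.deriv_le_slope (mem_univ v) (mem_univ w) h (hdiff v)
    rw [slope_def_field] at this
    have hvw : (0:ℝ) < w - v := by linarith
    rw [le_div_iff₀ hvw] at this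
    nlinarith

lemma conj_convexOn {f : ℝ → ℝ} (hfc : Continuous f)
    (hsuper : Tendsto (fun u => f u / |u|) (cocompact ℝ) atTop) :
    ConvexOn ℝ Set.univ (conjFn f) := by
  refine ⟨convex_univ, fun x _ y _ a b ha hb hab => ?_⟩
  refine ciSup_le fun v => ?_
  have h1 : x * v - f v ≤ conjFn f x := conj_ge hfc hsuper x v
  have h2 : y * v - f v ≤ conjFn f y := conj_ge hfc hsuper y v
  have : (a • x + b • y) * v - f v = a * (x * v - f v) + b * (y * v - f v) := by
    simp only [smul_eq_mul]; linear_combination f v * hab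
  rw [this]
  have := mul_le_mul_of_nonneg_left h1 ha
  have := mul_le_mul_of_nonneg_left h2 hb
  simp only [smul_eq_mul]; linarith

lemma conj_cont {f : ℝ → ℝ} (hfc : Continuous f)
    (hsuper : Tendsto (fun u => f u / |u|) (cocompact ℝ) atTop) :
    Continuous (conjFn f) := by
  have := (conj_convexOn hfc hsuper).continuousOn isOpen_univ
  rwa [continuousOn_univ] at this
/-- The `h`-curve minimizes the weighted action among Lipschitz curves with the
same endpoints: for every Lipschitz `γ : [t₁,t₂] → ℝ` with `γ t₁ = x₁`,
`γ t₂ = x₂`,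
`∫_{t₁}^{t₂} f*(γ'(θ)) e^{-β θ} dθ ≥ ∫_{t₁}^{t₂} f*(X'(θ)) e^{-β θ} dθ`,
where `X'(θ) = f'(y₀ e^{β θ})` and `X` joins `(x₁,t₁)` to `(x₂,t₂)`. -/
theorem hcurve_minimizes (f β : ℝ → ℝ)
    (hf : ContDiff ℝ 2 f)
    (hconv : StrictConvexOn ℝ Set.univ f)
    (hsuper : Tendsto (fun u => f u / |u|) (cocompact ℝ) atTop)
    (hβ : Continuous β)
    (t₁ t₂ x₁ x₂ y₀ : ℝ) (ht : t₁ < t₂)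
    (hX : x₁ + ∫ θ in t₁..t₂, deriv f (y₀ * Real.exp (β θ)) = x₂)
    (γ : ℝ → ℝ) (K : NNReal)
    (hγ : LipschitzOnWith K γ (Set.Icc t₁ t₂))
    (hγ1 : γ t₁ = x₁) (hγ2 : γ t₂ = x₂) :
    (∫ θ in t₁..t₂, conjFn f (deriv γ θ) * Real.exp (-β θ)) ≥
      ∫ θ in t₁..t₂, conjFn f (deriv f (y₀ * Real.exp (β θ))) * Real.exp (-β θ) := by
  have hfd : ∀ x, DifferentiableAt ℝ f x := fun x =>
    (hf.differentiable (by norm_num)).differentiableAt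
  have hfc : Continuous f := hf.continuous
  have hf' : Continuous (deriv f) := hf.continuous_deriv (by norm_num)
  have hcv : ConvexOn ℝ Set.univ f := hconv.convexOn
  set c : ℝ → ℝ := fun θ => y₀ * Real.exp (β θ) with hc
  have hccont : Continuous c := continuous_const.mul (Real.continuous_exp.comp hβ)
  have hXc : Continuous fun θ => deriv f (c θ) := hf'.comp hccont
  obtain ⟨g, hgK, hgeq⟩ := hγ.extend_real
  have hKb : ∀ θ, |deriv g θ| ≤ (K : ℝ) := by
    intro θ
    by_cases hdg : DifferentiableAt ℝ g θ
    · calc |deriv g θ| = ‖fderiv ℝ g θ 1‖ := by rw [← fderiv_apply_one_eq_deriv]; simp [Real.norm_eq_abs]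
        _ ≤ ‖fderiv ℝ g θ‖ * ‖(1:ℝ)‖ := (fderiv ℝ g θ).le_opNorm 1
        _ ≤ (K : ℝ) * 1 := by
            gcongr
            · exact norm_fderiv_le_of_lipschitz ℝ hgK
            · simp
        _ = (K : ℝ) := by ring
    · rw [deriv_zero_of_not_differentiableAt hdg]; simp
  obtain ⟨M, hM0⟩ := (isCompact_Icc (a := -(K:ℝ)) (b := (K:ℝ))).exists_bound_of_continuousOn
    (conj_cont hfc hsuper).continuousOn
  have hM : ∀ θ, |conjFn f (deriv g θ)| ≤ M := fun θ => by
    have := hM0 (deriv g θ) (abs_le.1 (hKb θ))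
    simpa [Real.norm_eq_abs] using this
  have hcontconj : Continuous (conjFn f) := conj_cont hfc hsuper
  have iint_g : IntervalIntegrable (fun θ => conjFn f (deriv g θ) * Real.exp (-β θ)) volume t₁ t₂ :=
    (bddm t₁ t₂ (hcontconj.measurable.comp (measurable_deriv g)) hM).mul_continuousOn
      ((Real.continuous_exp.comp hβ.neg).continuousOn)
  have iint_X : IntervalIntegrable (fun θ => conjFn f (deriv f (c θ)) * Real.exp (-β θ)) volume t₁ t₂ :=
    (((hcontconj.comp hXc).mul (Real.continuous_exp.comp hβ.neg)).intervalIntegrable _ _)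
  have iint_D : IntervalIntegrable (fun θ => deriv g θ) volume t₁ t₂ :=
    bddm _ _ (measurable_deriv g) hKb
  have iint_y : IntervalIntegrable (fun θ => y₀ * (deriv g θ - deriv f (c θ))) volume t₁ t₂ :=
    ((iint_D.sub (hXc.intervalIntegrable _ _)).const_mul y₀)
  have key : ∀ θ, conjFn f (deriv f (c θ)) * Real.exp (-β θ) + y₀ * (deriv g θ - deriv f (c θ)) ≤
      conjFn f (deriv g θ) * Real.exp (-β θ) := by
    intro θ
    have e1 : conjFn f (deriv f (c θ)) = deriv f (c θ) * c θ - f (c θ) :=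
      conj_eq hfc hcv hfd hsuper (c θ)
    have i1 : deriv g θ * c θ - f (c θ) ≤ conjFn f (deriv g θ) := conj_ge hfc hsuper _ _
    have i2 := mul_le_mul_of_nonneg_right i1 (Real.exp_pos (-β θ)).le
    have hcy : c θ * Real.exp (-β θ) = y₀ := by
      rw [hc]; show y₀ * Real.exp (β θ) * Real.exp (-β θ) = y₀
      rw [mul_assoc, ← Real.exp_add]; simp
    calc conjFn f (deriv f (c θ)) * Real.exp (-β θ) + y₀ * (deriv g θ - deriv f (c θ))
        = (deriv g θ * c θ - f (c θ)) * Real.exp (-β θ) := by rw [e1, ← hcy]; ring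
      _ ≤ conjFn f (deriv g θ) * Real.exp (-β θ) := i2
  have hgt1 : g t₁ = x₁ := by rw [← hgeq (left_mem_Icc.2 ht.le)]; exact hγ1
  have hgt2 : g t₂ = x₂ := by rw [← hgeq (right_mem_Icc.2 ht.le)]; exact hγ2
  have hint_D : (∫ θ in t₁..t₂, deriv g θ) = x₂ - x₁ := by
    rw [lip_ftc g K hgK t₁ t₂ ht.le, hgt1, hgt2]
  have hint_y : (∫ θ in t₁..t₂, y₀ * (deriv g θ - deriv f (c θ))) = 0 := by
    rw [intervalIntegral.integral_const_mul,
      intervalIntegral.integral_sub iint_D (hXc.intervalIntegrable _ _), hint_D]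
    have hXi : (∫ θ in t₁..t₂, deriv f (c θ)) = x₂ - x₁ := by linarith [hX]
    rw [hXi]; ring
  have step1 : (∫ θ in t₁..t₂, conjFn f (deriv γ θ) * Real.exp (-β θ)) =
      ∫ θ in t₁..t₂, conjFn f (deriv g θ) * Real.exp (-β θ) := by
    apply intervalIntegral.integral_congr_ae
    have hne : ∀ᵐ θ : ℝ ∂(volume : Measure ℝ), θ ≠ t₂ := by
      refine ae_iff.2 ?_
      have h2 : {a : ℝ | ¬ a ≠ t₂} = {t₂} := by ext a; simp
      rw [h2]; exact measure_singleton t₂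
    filter_upwards [hne] with θ hθ hmem
    rw [Set.uIoc_of_le ht.le] at hmem
    have hIoo : θ ∈ Ioo t₁ t₂ := ⟨hmem.1, lt_of_le_of_ne hmem.2 hθ⟩
    have hde : deriv γ θ = deriv g θ :=
      Filter.EventuallyEq.deriv_eq (eventually_of_mem (Icc_mem_nhds hIoo.1 hIoo.2)
        fun x hx => hgeq hx)
    rw [hde]
  have step2 : (∫ θ in t₁..t₂, (conjFn f (deriv f (c θ)) * Real.exp (-β θ) +
      y₀ * (deriv g θ - deriv f (c θ)))) ≤
      ∫ θ in t₁..t₂, conjFn f (deriv g θ) * Real.exp (-β θ) :=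
    intervalIntegral.integral_mono_on ht.le (iint_X.add iint_y) iint_g fun θ _ => key θ
  have step3 : (∫ θ in t₁..t₂, (conjFn f (deriv f (c θ)) * Real.exp (-β θ) +
      y₀ * (deriv g θ - deriv f (c θ)))) =
      (∫ θ in t₁..t₂, conjFn f (deriv f (c θ)) * Real.exp (-β θ)) := by
    rw [intervalIntegral.integral_add iint_X iint_y, hint_y, add_zero]
  rw [ge_iff_le, step1]
  calc (∫ θ in t₁..t₂, conjFn f (deriv f (c θ)) * Real.exp (-β θ))
      = _ := step3.symm
    _ ≤ _ := step2
end

section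
/- With notation as in the minimizing h-curve lemma: if γ is a Lipschitz curve from (x₁,t₁) to (x₂,t₂) and the set {θ ∈ [t₁,t₂] : γ'(θ) ≠ X'(θ)} has positive Lebesgue measure, then ∫_{t₁}^{t₂} f*(γ'(θ))e^{−β(θ)}dθ > ∫_{t₁}^{t₂} f*(X'(θ))e^{−β(θ)}dθ (strict inequality). -/
open Real Set Filter MeasureTheory intervalIntegral

open Topology

section AuxLemmas

variable {f : ℝ → ℝ}

open Real Set Filter MeasureTheory intervalIntegral



lemma bddAbove_aux (hfc : Continuous f)
    (hsuper : Tendsto (fun u => f u / |u|) (cocompact ℝ) atTop) (u : ℝ) :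
    BddAbove (Set.range fun v => u * v - f v) := by
  obtain ⟨s, hs, hbound⟩ := (hasBasis_cocompact.eventually_iff).1
    (hsuper.eventually_ge_atTop (|u| + 1))
  obtain ⟨R, hR⟩ := hs.isBounded.subset_closedBall 0
  set R' : ℝ := max R 1 with hR'def
  have hR1 : (1:ℝ) ≤ R' := le_max_right _ _
  obtain ⟨m, hm, hmin⟩ := isCompact_Icc.exists_isMinOn
    (nonempty_Icc.2 (by linarith : -R' ≤ R')) hfc.continuousOn
  refine ⟨max 0 (|u| * R' - f m), ?_⟩
  rintro _ ⟨v, rfl⟩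
  by_cases hv : |v| ≤ R'
  · have h1 : u * v ≤ |u| * R' := by
      calc u * v ≤ |u * v| := le_abs_self _
      _ = |u| * |v| := abs_mul u v
      _ ≤ |u| * R' := by
          have := abs_nonneg u
          nlinarith [abs_nonneg v]
    have h2 : f m ≤ f v := hmin (abs_le.1 hv)
    exact le_max_of_le_right (by dsimp only; linarith)
  · push_neg at hv
    have hvs : v ∉ s := by
      intro h
      have := hR h
      simp only [Metric.mem_closedBall, Real.dist_eq, sub_zero] at this
      have : R ≤ R' := le_max_left _ _
      linarith [hR h, (by simpa [Real.dist_eq] using hR h : |v| ≤ R)]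
    have h3 : (|u| + 1) ≤ f v / |v| := hbound hvs
    have hvpos : (0:ℝ) < |v| := by linarith
    have h4 : (|u| + 1) * |v| ≤ f v := (le_div_iff₀ hvpos).1 h3
    have h5 : u * v ≤ |u| * |v| := (le_abs_self _).trans (abs_mul u v).le
    have := abs_nonneg u
    exact le_max_of_le_left (by dsimp only; nlinarith)

lemma le_conjFn (hfc : Continuous f)
    (hsuper : Tendsto (fun u => f u / |u|) (cocompact ℝ) atTop) (u v : ℝ) :
    u * v - f v ≤ conjFn f u :=
  le_ciSup (bddAbove_aux hfc hsuper u) v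

lemma tangent_le (hd : Differentiable ℝ f) (hconv : ConvexOn ℝ Set.univ f) (v w : ℝ) :
    f v + deriv f v * (w - v) ≤ f w := by
  rcases lt_trichotomy v w with h | h | h
  · have h1 := hconv.deriv_le_slope (mem_univ v) (mem_univ w) h (hd v)
    rw [slope_def_field] at h1
    have hw : (0:ℝ) < w - v := by linarith
    have h2 := (le_div_iff₀ hw).1 h1
    linarith
  · simp [h]
  · have h1 := hconv.slope_le_deriv (mem_univ w) (mem_univ v) h (hd v)
    rw [slope_def_field] at h1
    have hw : (0:ℝ) < v - w := by linarith
    have h2 := (div_le_iff₀ hw).1 h1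
    nlinarith



variable {f : ℝ → ℝ}


lemma conjFn_deriv (hfc : Continuous f)
    (hsuper : Tendsto (fun u => f u / |u|) (cocompact ℝ) atTop)
    (hd : Differentiable ℝ f) (hconv : ConvexOn ℝ Set.univ f) (v : ℝ) :
    conjFn f (deriv f v) = deriv f v * v - f v := by
  refine le_antisymm (ciSup_le fun w => ?_) (le_conjFn hfc hsuper _ v)
  have := tangent_le hd hconv v w
  nlinarith

lemma conjFn_strict (hfc : Continuous f)
    (hsuper : Tendsto (fun u => f u / |u|) (cocompact ℝ) atTop)
    (hd : Differentiable ℝ f) (hconv : ConvexOn ℝ Set.univ f)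
    (hdc : Continuous (deriv f)) {u v : ℝ} (h : u ≠ deriv f v) :
    u * v - f v < conjFn f u := by
  rcases h.lt_or_gt with h | h
  · -- u < deriv f v : pick w < v with u < deriv f w
    have h1 : ∀ᶠ x in 𝓝 v, u < deriv f x := hdc.continuousAt.eventually_const_lt h
    obtain ⟨w, hw1, hw2⟩ := ((h1.filter_mono nhdsWithin_le_nhds).and
      (eventually_mem_nhdsWithin (s := Iio v))).exists
    have h2 := hconv.deriv_le_slope (mem_univ w) (mem_univ v) hw2 (hd w)
    rw [slope_def_field] at h2
    have hvw : (0:ℝ) < v - w := by exact sub_pos.2 hw2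
    have h3 : deriv f w * (v - w) ≤ f v - f w := (le_div_iff₀ hvw).1 h2
    have h4 : u * v - f v < u * w - f w := by nlinarith [mul_pos (sub_pos.2 hw1) hvw]
    exact h4.trans_le (le_conjFn hfc hsuper u w)
  · have h1 : ∀ᶠ x in 𝓝 v, deriv f x < u := hdc.continuousAt.eventually_lt_const h
    obtain ⟨w, hw1, hw2⟩ := ((h1.filter_mono nhdsWithin_le_nhds).and
      (eventually_mem_nhdsWithin (s := Ioi v))).exists
    have h2 := hconv.slope_le_deriv (mem_univ v) (mem_univ w) hw2 (hd w)
    rw [slope_def_field] at h2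
    have hvw : (0:ℝ) < w - v := sub_pos.2 hw2
    have h3 : f w - f v ≤ deriv f w * (w - v) := (div_le_iff₀ hvw).1 h2
    have h4 : u * v - f v < u * w - f w := by nlinarith [mul_pos (sub_pos.2 hw1) hvw]
    exact h4.trans_le (le_conjFn hfc hsuper u w)

lemma continuous_conjFn (hfc : Continuous f)
    (hsuper : Tendsto (fun u => f u / |u|) (cocompact ℝ) atTop) :
    Continuous (conjFn f) := by
  have hcv : ConvexOn ℝ Set.univ (conjFn f) := by
    refine ⟨convex_univ, fun x _ y _ a b ha hb hab => ?_⟩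
    refine ciSup_le fun v => ?_
    have h1 : x * v - f v ≤ conjFn f x := le_conjFn hfc hsuper x v
    have h2 : y * v - f v ≤ conjFn f y := le_conjFn hfc hsuper y v
    have he : (a • x + b • y) * v - f v = a * (x * v - f v) + b * (y * v - f v) := by
      simp only [smul_eq_mul]
      linear_combination (f v) * hab
    rw [he]
    simp only [smul_eq_mul]
    exact add_le_add (mul_le_mul_of_nonneg_left h1 ha) (mul_le_mul_of_nonneg_left h2 hb)
  rw [← continuousOn_univ]
  exact hcv.continuousOn isOpen_univ

end AuxLemmas


lemma slope_seq_lim {s : ℕ → ℝ} (hs_pos : ∀ n, 0 < s n)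
    (hs_lim : Tendsto s atTop (𝓝 0)) (φ : ℝ → ℝ) (d x : ℝ) (hφ : HasDerivAt φ d x) :
    Tendsto (fun n => (φ (x + s n) - φ x) / s n) atTop (𝓝 d) := by
  have h1 : Tendsto (fun n => x + s n) atTop (𝓝[≠] x) := by
    apply tendsto_nhdsWithin_of_tendsto_nhds_of_eventually_within
    · simpa using tendsto_const_nhds.add hs_lim
    · filter_upwards with n
      simp [(hs_pos n).ne']
  have h2 := (hasDerivAt_iff_tendsto_slope.1 hφ).comp h1
  refine h2.congr fun n => ?_
  show slope φ x (x + s n) = _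
  rw [slope_def_field, add_sub_cancel_left]

lemma lipschitz_ftc {g : ℝ → ℝ} {K : NNReal} (hg : LipschitzWith K g) {a b : ℝ}
    (hab : a ≤ b) : ∫ x in a..b, deriv g x = g b - g a := by
  have hgc : Continuous g := hg.continuous
  set F : ℝ → ℝ := fun x => ∫ t in a..x, g t with hF
  have hFd : ∀ x : ℝ, HasDerivAt F (g x) x := fun x =>
    (hgc.integral_hasStrictDerivAt a x).hasDerivAt
  set s : ℕ → ℝ := fun n => (1:ℝ)/(n+1) with hsdef
  have hs_pos : ∀ n, 0 < s n := fun n => by positivity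
  have hs_lim : Tendsto s atTop (𝓝 0) := tendsto_one_div_add_atTop_nhds_zero_nat
  have hae : ∀ᵐ x ∂(volume.restrict (Set.Ioc a b)),
      Tendsto (fun n => (g (x + s n) - g x) / s n) atTop (𝓝 (deriv g x)) := by
    apply ae_restrict_of_ae
    filter_upwards [hg.ae_differentiableAt] with x hx
    exact slope_seq_lim hs_pos hs_lim g _ x hx.hasDerivAt
  have hbound : ∀ n, ∀ᵐ x ∂(volume.restrict (Set.Ioc a b)),
      ‖(g (x + s n) - g x) / s n‖ ≤ (K:ℝ) := by
    intro n
    filter_upwards with x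
    rw [norm_div, Real.norm_eq_abs, Real.norm_eq_abs, abs_of_pos (hs_pos n),
      div_le_iff₀ (hs_pos n)]
    have h := hg.dist_le_mul (x + s n) x
    rw [Real.dist_eq, Real.dist_eq] at h
    simpa [abs_of_pos (hs_pos n)] using h
  have hmeas : ∀ n, AEStronglyMeasurable (fun x => (g (x + s n) - g x) / s n)
      (volume.restrict (Set.Ioc a b)) := fun n =>
    (((hgc.comp (continuous_id.add continuous_const)).sub hgc).div_const _).aestronglyMeasurable
  have hDCT := MeasureTheory.tendsto_integral_of_dominated_convergence
      (fun _ => (K:ℝ)) hmeas (integrable_const _) hbound hae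
  have hcalc : ∀ n, (∫ x in Set.Ioc a b, (g (x + s n) - g x) / s n) =
      (F (b + s n) - F b) / s n - (F (a + s n) - F a) / s n := by
    intro n
    have h1 : (∫ x in Set.Ioc a b, (g (x + s n) - g x) / s n)
        = ∫ x in a..b, (g (x + s n) - g x) / s n := (intervalIntegral.integral_of_le hab).symm
    have hint1 : IntervalIntegrable (fun x => g (x + s n)) volume a b :=
      (hgc.comp (continuous_id.add continuous_const)).intervalIntegrable _ _
    have hint2 : IntervalIntegrable g volume a b := hgc.intervalIntegrable _ _
    have hint3 : IntervalIntegrable g volume a (b + s n) := hgc.intervalIntegrable _ _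
    have hint4 : IntervalIntegrable g volume a (a + s n) := hgc.intervalIntegrable _ _
    rw [h1, intervalIntegral.integral_div, intervalIntegral.integral_sub hint1 hint2,
      intervalIntegral.integral_comp_add_right (fun x => g x) (s n)]
    have h2 : (∫ x in a..b + s n, g x) - ∫ x in a..a + s n, g x
        = ∫ x in a + s n..b + s n, g x := intervalIntegral.integral_interval_sub_left hint3 hint4
    have hFa : F a = 0 := intervalIntegral.integral_same
    have hFb : F b = ∫ x in a..b, g x := rfl
    have hFbs : F (b + s n) = ∫ x in a..b + s n, g x := rfl
    have hFas : F (a + s n) = ∫ x in a..a + s n, g x := rfl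
    rw [← h2, hFa, ← hFb, ← hFbs, ← hFas]
    ring
  have hlim2 : Tendsto (fun n => (F (b + s n) - F b) / s n - (F (a + s n) - F a) / s n)
      atTop (𝓝 (g b - g a)) :=
    (slope_seq_lim hs_pos hs_lim F (g b) b (hFd b)).sub
      (slope_seq_lim hs_pos hs_lim F (g a) a (hFd a))
  have hmain := tendsto_nhds_unique ((hDCT.congr fun n => hcalc n)) hlim2
  rw [intervalIntegral.integral_of_le hab, hmain]

/-- Strict minimality of the `h`-curve: if a Lipschitz competitor `γ` with the
same endpoints has `γ' ≠ X'` on a set of positive Lebesgue measure, then its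
weighted action is strictly larger than that of the `h`-curve `X`. -/
theorem hcurve_strict_min (f β : ℝ → ℝ)
    (hf : ContDiff ℝ 2 f)
    (hconv : StrictConvexOn ℝ Set.univ f)
    (hsuper : Tendsto (fun u => f u / |u|) (cocompact ℝ) atTop)
    (hβ : Continuous β)
    (t₁ t₂ x₁ x₂ y₀ : ℝ) (ht : t₁ < t₂)
    (hX : x₁ + ∫ θ in t₁..t₂, deriv f (y₀ * Real.exp (β θ)) = x₂)
    (γ : ℝ → ℝ) (K : NNReal)
    (hγ : LipschitzOnWith K γ (Set.Icc t₁ t₂))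
    (hγ1 : γ t₁ = x₁) (hγ2 : γ t₂ = x₂)
    (hdiff : 0 < volume {θ ∈ Set.Icc t₁ t₂ |
      deriv γ θ ≠ deriv f (y₀ * Real.exp (β θ))}) :
    (∫ θ in t₁..t₂, conjFn f (deriv γ θ) * Real.exp (-β θ)) >
      ∫ θ in t₁..t₂, conjFn f (deriv f (y₀ * Real.exp (β θ))) * Real.exp (-β θ) := by
  have hfc : Continuous f := hf.continuous
  have hd : Differentiable ℝ f := hf.differentiable (by norm_num)
  have hdc : Continuous (deriv f) := hf.continuous_deriv one_le_two
  have hcv : ConvexOn ℝ Set.univ f := hconv.convexOn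
  have hcj : Continuous (conjFn f) := continuous_conjFn hfc hsuper
  set Xd : ℝ → ℝ := fun θ => deriv f (y₀ * Real.exp (β θ)) with hXddef
  set E : ℝ → ℝ := fun θ => Real.exp (-β θ) with hEdef
  have hXdc : Continuous Xd := hdc.comp (continuous_const.mul (Real.continuous_exp.comp hβ))
  have hE_pos : ∀ θ, 0 < E θ := fun θ => Real.exp_pos _
  have hEc : Continuous E := Real.continuous_exp.comp hβ.neg
  obtain ⟨g, hgLip, hgEq⟩ := hγ.extend_real
  have hderiv_eq : ∀ θ ∈ Set.Ioo t₁ t₂, deriv γ θ = deriv g θ := by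
    intro θ hθ
    apply Filter.EventuallyEq.deriv_eq
    filter_upwards [Icc_mem_nhds hθ.1 hθ.2] with x hx
    exact hgEq hx
  have hgK : ∀ θ, |deriv g θ| ≤ (K:ℝ) := fun θ => by
    simpa [Real.norm_eq_abs] using norm_deriv_le_of_lipschitz hgLip (x₀ := θ)
  -- pointwise inequality
  have key : ∀ (θ : ℝ) (u : ℝ),
      (y₀ * (u - Xd θ) ≤ conjFn f u * E θ - conjFn f (Xd θ) * E θ) ∧
      (u ≠ Xd θ → y₀ * (u - Xd θ) < conjFn f u * E θ - conjFn f (Xd θ) * E θ) := by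
    intro θ u
    set vb : ℝ := y₀ * Real.exp (β θ) with hvbdef
    have e1 : conjFn f (Xd θ) = Xd θ * vb - f vb := conjFn_deriv hfc hsuper hd hcv vb
    have h6 : vb * E θ = y₀ := by
      rw [hvbdef, hEdef, mul_assoc, ← Real.exp_add]
      simp
    have h7 : u * vb * E θ = u * y₀ := by rw [mul_assoc, h6]
    have h8 : Xd θ * vb * E θ = Xd θ * y₀ := by rw [mul_assoc, h6]
    constructor
    · have e2 : u * vb - f vb ≤ conjFn f u := le_conjFn hfc hsuper u vb
      have h5 : (u * vb - f vb) * E θ ≤ conjFn f u * E θ :=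
        mul_le_mul_of_nonneg_right e2 (hE_pos θ).le
      rw [e1]
      nlinarith [h5, h7, h8]
    · intro hne
      have hne' : u ≠ deriv f vb := hne
      have e2 : u * vb - f vb < conjFn f u := conjFn_strict hfc hsuper hd hcv hdc hne'
      have h5 : (u * vb - f vb) * E θ < conjFn f u * E θ :=
        mul_lt_mul_of_pos_right e2 (hE_pos θ)
      rw [e1]
      nlinarith [h5, h7, h8]
  set Δ : ℝ → ℝ := fun θ => conjFn f (deriv g θ) * E θ - conjFn f (Xd θ) * E θ
      - y₀ * (deriv g θ - Xd θ) with hΔdef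
  have hΔ_nonneg : ∀ θ, 0 ≤ Δ θ := fun θ => by
    have := (key θ (deriv g θ)).1
    rw [hΔdef]
    dsimp only
    linarith
  have hΔ_pos : ∀ θ, deriv g θ ≠ Xd θ → 0 < Δ θ := fun θ h => by
    have := (key θ (deriv g θ)).2 h
    rw [hΔdef]
    dsimp only
    linarith
  -- integrability
  have hmeasg : Measurable (deriv g) := measurable_deriv g
  obtain ⟨M₁, hM₁⟩ := (isCompact_Icc (a := -(K:ℝ)) (b := (K:ℝ))).exists_bound_of_continuousOn
      hcj.continuousOn
  obtain ⟨M₂, hM₂⟩ := (isCompact_Icc (a := t₁) (b := t₂)).exists_bound_of_continuousOn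
      hEc.continuousOn
  have hM₁0 : 0 ≤ M₁ := (norm_nonneg _).trans (hM₁ 0 ⟨by simp, by simp⟩)
  have hI1 : IntervalIntegrable (fun θ => conjFn f (deriv g θ) * E θ) volume t₁ t₂ := by
    rw [intervalIntegrable_iff, uIoc_of_le ht.le]
    apply Integrable.mono' (g := fun _ => M₁ * M₂)
    · exact integrableOn_const measure_Ioc_lt_top.ne
    · exact ((hcj.measurable.comp hmeasg).mul hEc.measurable).aestronglyMeasurable
    · refine (ae_restrict_iff' measurableSet_Ioc).2 (Eventually.of_forall fun x hx => ?_)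
      rw [norm_mul]
      have h1 : ‖conjFn f (deriv g x)‖ ≤ M₁ := hM₁ _ (abs_le.1 (hgK x))
      have h2 : ‖E x‖ ≤ M₂ := hM₂ _ (Ioc_subset_Icc_self hx)
      exact mul_le_mul h1 h2 (norm_nonneg _) hM₁0
  have hI2 : IntervalIntegrable (fun θ => conjFn f (Xd θ) * E θ) volume t₁ t₂ :=
    ((hcj.comp hXdc).mul hEc).intervalIntegrable _ _
  have hI3 : IntervalIntegrable (deriv g) volume t₁ t₂ := by
    rw [intervalIntegrable_iff, uIoc_of_le ht.le]
    apply Integrable.mono' (g := fun _ => (K:ℝ))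
    · exact integrableOn_const measure_Ioc_lt_top.ne
    · exact hmeasg.aestronglyMeasurable
    · exact Eventually.of_forall fun x => by simpa [Real.norm_eq_abs] using hgK x
  have hI4 : IntervalIntegrable Xd volume t₁ t₂ := hXdc.intervalIntegrable _ _
  have hIΔ : IntervalIntegrable Δ volume t₁ t₂ := (hI1.sub hI2).sub ((hI3.sub hI4).const_mul y₀)
  -- the two FTC computations
  have hC : (∫ θ in t₁..t₂, deriv g θ) = x₂ - x₁ := by
    rw [lipschitz_ftc hgLip ht.le, ← hgEq (left_mem_Icc.2 ht.le),
      ← hgEq (right_mem_Icc.2 ht.le), hγ1, hγ2]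
  have hD : (∫ θ in t₁..t₂, Xd θ) = x₂ - x₁ := by
    have h0 : (∫ θ in t₁..t₂, Xd θ) = ∫ θ in t₁..t₂, deriv f (y₀ * Real.exp (β θ)) := rfl
    rw [h0]
    linarith [hX]
  have hsplit : (∫ θ in t₁..t₂, Δ θ)
      = (∫ θ in t₁..t₂, conjFn f (deriv g θ) * E θ)
        - (∫ θ in t₁..t₂, conjFn f (Xd θ) * E θ)
        - y₀ * ((∫ θ in t₁..t₂, deriv g θ) - ∫ θ in t₁..t₂, Xd θ) := by
    rw [hΔdef]
    rw [intervalIntegral.integral_sub (hI1.sub hI2) ((hI3.sub hI4).const_mul y₀),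
      intervalIntegral.integral_sub hI1 hI2, intervalIntegral.integral_const_mul,
      intervalIntegral.integral_sub hI3 hI4]
  -- positivity of ∫ Δ
  have hpair : volume ({t₁, t₂} : Set ℝ) = 0 :=
    ((Set.finite_singleton t₂).insert t₁).countable.measure_zero volume
  have hpos : 0 < ∫ θ in t₁..t₂, Δ θ := by
    rw [intervalIntegral.integral_of_le ht.le]
    have hnn : 0 ≤ᵐ[volume.restrict (Set.Ioc t₁ t₂)] Δ := Eventually.of_forall hΔ_nonneg
    have hint : IntegrableOn Δ (Set.Ioc t₁ t₂) volume := by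
      rw [intervalIntegrable_iff, uIoc_of_le ht.le] at hIΔ
      exact hIΔ
    rw [setIntegral_pos_iff_support_of_nonneg_ae hnn hint]
    have hdiff' : 0 < volume {θ ∈ Set.Icc t₁ t₂ | deriv γ θ ≠ Xd θ} := hdiff
    set S := {θ ∈ Set.Icc t₁ t₂ | deriv γ θ ≠ Xd θ} with hSdef
    have hsub : S ∩ Set.Ioo t₁ t₂ ⊆ Function.support Δ ∩ Set.Ioc t₁ t₂ := by
      rintro θ ⟨⟨hθI, hθne⟩, hθO⟩
      refine ⟨(hΔ_pos θ ?_).ne', Ioo_subset_Ioc_self hθO⟩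
      rw [← hderiv_eq θ hθO]
      exact hθne
    refine lt_of_lt_of_le ?_ (measure_mono hsub)
    have hScover : S ⊆ (S ∩ Set.Ioo t₁ t₂) ∪ {t₁, t₂} := by
      rintro θ ⟨hθI, hθne⟩
      rcases eq_or_lt_of_le hθI.1 with h | h
      · exact Or.inr (Or.inl h.symm)
      · rcases eq_or_lt_of_le hθI.2 with h2 | h2
        · exact Or.inr (Or.inr h2)
        · exact Or.inl ⟨⟨hθI, hθne⟩, h, h2⟩
    by_contra hze
    push_neg at hze
    have h0 : volume (S ∩ Set.Ioo t₁ t₂) = 0 := le_antisymm hze zero_le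
    have h1 : volume S ≤ volume (S ∩ Set.Ioo t₁ t₂) + volume ({t₁, t₂} : Set ℝ) :=
      (measure_mono hScover).trans (measure_union_le _ _)
    rw [h0, hpair] at h1
    simp only [add_zero] at h1
    simp [le_antisymm h1 zero_le] at hdiff'
  -- replace γ by g in the goal
  have hcongr : (∫ θ in t₁..t₂, conjFn f (deriv γ θ) * E θ)
      = ∫ θ in t₁..t₂, conjFn f (deriv g θ) * E θ := by
    apply intervalIntegral.integral_congr_ae
    have hae2 : ∀ᵐ x : ℝ ∂volume, x ≠ t₂ := by
      rw [ae_iff]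
      simpa using measure_singleton t₂
    filter_upwards [hae2] with x hx hxI
    rw [uIoc_of_le ht.le] at hxI
    have hxO : x ∈ Set.Ioo t₁ t₂ := ⟨hxI.1, lt_of_le_of_ne hxI.2 hx⟩
    rw [hderiv_eq x hxO]
  show (∫ θ in t₁..t₂, conjFn f (deriv γ θ) * E θ) > ∫ θ in t₁..t₂, conjFn f (Xd θ) * E θ
  rw [hcongr]
  have := hpos
  rw [hsplit, hC, hD] at this
  linarith
end

section
/- Let X be the h-curve joining (x₁,t₁) to (x₂,t₂), i.e., X'(θ)=f'(y₀ e^{β(θ)}) with X(t₁)=x₁, X(t₂)=x₂ and t₁<t₂. If β attains its min and max on [t₁,t₂] and y₀ ≥ 0, then (f')^{-1}((x₂−x₁)/(t₂−t₁)) / e^{max_{[t₁,t₂]} β} ≤ y₀ ≤ (f')^{-1}((x₂−x₁)/(t₂−t₁)) / e^{min_{[t₁,t₂]} β}. In general |y₀| ≤ max{ |(f')^{-1}((x₂−x₁)/(t₂−t₁))| / e^{max β}, |(f')^{-1}((x₂−x₁)/(t₂−t₁))| / e^{min β} }. -/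
open Real Set Filter intervalIntegral

/-- Bounds on the `h`-curve parameter `y₀` in terms of the average slope
`(x₂ - x₁)/(t₂ - t₁)`, the inverse of `f'`, and the extrema of `β` on
`[t₁,t₂]`. Here `g` denotes the inverse of `f'`. -/
theorem hcurve_parameter_bounds (f β g : ℝ → ℝ)
    (hf : ContDiff ℝ 2 f)
    (hconv : StrictConvexOn ℝ Set.univ f)
    (hsuper : Tendsto (fun u => f u / |u|) (cocompact ℝ) atTop)
    (hβ : Continuous β)
    (hg : ∀ x, deriv f (g x) = x) (hg' : ∀ x, g (deriv f x) = x)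
    (t₁ t₂ x₁ x₂ y₀ : ℝ) (ht : t₁ < t₂)
    (hX : x₁ + ∫ θ in t₁..t₂, deriv f (y₀ * Real.exp (β θ)) = x₂) :
    (0 ≤ y₀ →
      g ((x₂ - x₁) / (t₂ - t₁)) / Real.exp (sSup (β '' Set.Icc t₁ t₂)) ≤ y₀ ∧
      y₀ ≤ g ((x₂ - x₁) / (t₂ - t₁)) / Real.exp (sInf (β '' Set.Icc t₁ t₂))) ∧
    |y₀| ≤ max
      (|g ((x₂ - x₁) / (t₂ - t₁))| / Real.exp (sSup (β '' Set.Icc t₁ t₂)))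
      (|g ((x₂ - x₁) / (t₂ - t₁))| / Real.exp (sInf (β '' Set.Icc t₁ t₂))) := by
  set s := (x₂ - x₁) / (t₂ - t₁) with hs
  set M := sSup (β '' Set.Icc t₁ t₂) with hM
  set m := sInf (β '' Set.Icc t₁ t₂) with hm
  have htpos : (0:ℝ) < t₂ - t₁ := by linarith
  -- monotonicity of deriv f
  have hdiff : ∀ x : ℝ, DifferentiableAt ℝ f x := fun x =>
    (hf.differentiable two_ne_zero).differentiableAt
  have hmonoOn : MonotoneOn (deriv f) Set.univ :=
    hconv.convexOn.monotoneOn_deriv (fun x _ => hdiff x)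
  have hmono : Monotone (deriv f) := fun a b hab =>
    hmonoOn (mem_univ a) (mem_univ b) hab
  -- g is monotone
  have hgmono : Monotone g := by
    intro a b hab
    by_contra h
    push_neg at h
    have h1 : deriv f (g b) ≤ deriv f (g a) := hmono h.le
    rw [hg, hg] at h1
    have : a = b := le_antisymm hab h1
    subst this
    exact lt_irrefl _ h
  -- bounds of β on Icc
  have hK : IsCompact (β '' Set.Icc t₁ t₂) := (isCompact_Icc).image hβ
  have hbdd_above : BddAbove (β '' Set.Icc t₁ t₂) := hK.bddAbove
  have hbdd_below : BddBelow (β '' Set.Icc t₁ t₂) := hK.bddBelow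
  have hβM : ∀ θ ∈ Set.Icc t₁ t₂, β θ ≤ M := fun θ hθ =>
    le_csSup hbdd_above (mem_image_of_mem β hθ)
  have hβm : ∀ θ ∈ Set.Icc t₁ t₂, m ≤ β θ := fun θ hθ =>
    csInf_le hbdd_below (mem_image_of_mem β hθ)
  -- exp positivity
  have heM : (0:ℝ) < Real.exp M := Real.exp_pos M
  have hem : (0:ℝ) < Real.exp m := Real.exp_pos m
  -- integrability
  have hcont : Continuous (fun θ => deriv f (y₀ * Real.exp (β θ))) :=
    (hf.continuous_deriv one_le_two).comp
      (continuous_const.mul (Real.continuous_exp.comp hβ))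
  have hInt : IntervalIntegrable (fun θ => deriv f (y₀ * Real.exp (β θ)))
      MeasureTheory.volume t₁ t₂ := hcont.intervalIntegrable t₁ t₂
  have hIval : (∫ θ in t₁..t₂, deriv f (y₀ * Real.exp (β θ))) = x₂ - x₁ := by
    linarith
  -- generic comparison lemma
  have key : ∀ c : ℝ, (∀ θ ∈ Set.Icc t₁ t₂, c ≤ y₀ * Real.exp (β θ)) →
      deriv f c ≤ s := by
    intro c hc
    have h1 : (∫ _ in t₁..t₂, deriv f c) ≤
        ∫ θ in t₁..t₂, deriv f (y₀ * Real.exp (β θ)) := by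
      apply intervalIntegral.integral_mono_on ht.le
        (intervalIntegrable_const) hInt
      intro θ hθ
      exact hmono (hc θ hθ)
    rw [intervalIntegral.integral_const, hIval, smul_eq_mul] at h1
    rw [hs, le_div_iff₀ htpos]
    linarith
  have key' : ∀ c : ℝ, (∀ θ ∈ Set.Icc t₁ t₂, y₀ * Real.exp (β θ) ≤ c) →
      s ≤ deriv f c := by
    intro c hc
    have h1 : (∫ θ in t₁..t₂, deriv f (y₀ * Real.exp (β θ))) ≤
        ∫ _ in t₁..t₂, deriv f c := by
      apply intervalIntegral.integral_mono_on ht.le hInt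
        (intervalIntegrable_const)
      intro θ hθ
      exact hmono (hc θ hθ)
    rw [intervalIntegral.integral_const, hIval, smul_eq_mul] at h1
    rw [hs, div_le_iff₀ htpos]
    linarith
  -- nonnegative case
  have hpos_case : 0 ≤ y₀ → g s / Real.exp M ≤ y₀ ∧ y₀ ≤ g s / Real.exp m := by
    intro hy
    have hlow : deriv f (y₀ * Real.exp m) ≤ s := by
      apply key
      intro θ hθ
      exact mul_le_mul_of_nonneg_left (Real.exp_le_exp.2 (hβm θ hθ)) hy
    have hhigh : s ≤ deriv f (y₀ * Real.exp M) := by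
      apply key'
      intro θ hθ
      exact mul_le_mul_of_nonneg_left (Real.exp_le_exp.2 (hβM θ hθ)) hy
    have h1 : y₀ * Real.exp m ≤ g s := by
      have := hgmono hlow
      rwa [hg'] at this
    have h2 : g s ≤ y₀ * Real.exp M := by
      have := hgmono hhigh
      rwa [hg'] at this
    constructor
    · rw [div_le_iff₀ heM]; linarith
    · rw [le_div_iff₀ hem]; linarith
  refine ⟨hpos_case, ?_⟩
  rcases le_or_gt 0 y₀ with hy | hy
  · obtain ⟨h1, h2⟩ := hpos_case hy
    have hgs : 0 ≤ g s := by
      have : g s / Real.exp M ≤ y₀ := h1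
      nlinarith [(le_div_iff₀ hem).mp h2]
    have : |y₀| ≤ |g s| / Real.exp m := by
      rw [abs_of_nonneg hy, abs_of_nonneg hgs]
      exact h2
    exact this.trans (le_max_right _ _)
  · -- negative case
    have hlow : deriv f (y₀ * Real.exp M) ≤ s := by
      apply key
      intro θ hθ
      exact mul_le_mul_of_nonpos_left (Real.exp_le_exp.2 (hβM θ hθ)) hy.le
    have hhigh : s ≤ deriv f (y₀ * Real.exp m) := by
      apply key'
      intro θ hθ
      exact mul_le_mul_of_nonpos_left (Real.exp_le_exp.2 (hβm θ hθ)) hy.le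
    have h1 : y₀ * Real.exp M ≤ g s := by
      have := hgmono hlow; rwa [hg'] at this
    have h2 : g s ≤ y₀ * Real.exp m := by
      have := hgmono hhigh; rwa [hg'] at this
    have hgs : g s ≤ 0 := h2.trans (by nlinarith)
    have : |y₀| ≤ |g s| / Real.exp m := by
      rw [abs_of_neg hy, abs_of_nonpos hgs, le_div_iff₀ hem]
      nlinarith
    exact this.trans (le_max_right _ _)
end

section
/- Fundamental identity for the initial functional: for x, y ∈ ℝ, t > τ ≥ 0, ∫_τ^t e^{−β(θ)} f*(f'(h(x−y,t,τ) e^{β(θ)})) dθ = −∫_x^y h(x−z,t,τ) dz − ∫_τ^t e^{−β(θ)} f(h(0,t,τ) e^{β(θ)}) dθ, where h(w,t,τ) denotes the unique h-parameter of the curve traversing horizontal displacement w from time τ to t. -/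
open Real Set Filter intervalIntegral

lemma conjFn_deriv_s13 {f : ℝ → ℝ} (hfd : Differentiable ℝ f)
    (hconv : ConvexOn ℝ Set.univ f) (p : ℝ) :
    conjFn f (deriv f p) = p * deriv f p - f p := by
  have key : ∀ v : ℝ, deriv f p * v - f v ≤ p * deriv f p - f p := by
    intro v
    rcases lt_trichotomy v p with hv | rfl | hv
    · have hs := hconv.slope_le_deriv (mem_univ v) (mem_univ p) hv (hfd p)
      rw [slope_def_field] at hs
      have hpv : 0 < p - v := sub_pos.2 hv
      rw [div_le_iff₀ hpv] at hs
      nlinarith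
    · nlinarith [mul_comm v (deriv f v)]
    · have hs := hconv.deriv_le_slope (mem_univ p) (mem_univ v) hv (hfd p)
      rw [slope_def_field] at hs
      have hpv : 0 < v - p := sub_pos.2 hv
      rw [le_div_iff₀ hpv] at hs
      nlinarith
  have hbdd : BddAbove (Set.range fun v => deriv f p * v - f v) :=
    ⟨p * deriv f p - f p, by rintro _ ⟨v, rfl⟩; exact key v⟩
  refine le_antisymm (ciSup_le key) ?_
  calc p * deriv f p - f p = deriv f p * p - f p := by ring
    _ ≤ _ := le_ciSup hbdd p

open MeasureTheory in
lemma my_interval_swap {F : ℝ → ℝ → ℝ} (hF : Continuous (Function.uncurry F))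
    (a b c d : ℝ) :
    (∫ x in a..b, ∫ y in c..d, F x y) = ∫ y in c..d, ∫ x in a..b, F x y := by
  have key : ∀ a b c d : ℝ,
      (∫ x in Ioc a b, ∫ y in Ioc c d, F x y) = ∫ y in Ioc c d, ∫ x in Ioc a b, F x y := by
    intro a b c d
    have hint : Integrable (Function.uncurry F)
        ((volume.restrict (Ioc a b)).prod (volume.restrict (Ioc c d))) := by
      rw [Measure.prod_restrict]
      exact (hF.continuousOn.integrableOn_compact
        (isCompact_Icc.prod isCompact_Icc)).mono_set
        (Set.prod_mono Ioc_subset_Icc_self Ioc_subset_Icc_self)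
    exact integral_integral_swap hint
  simp_rw [intervalIntegral_eq_integral_uIoc, MeasureTheory.integral_smul]
  rw [show (Set.uIoc a b : Set ℝ) = Ioc (min a b) (max a b) from rfl,
    show (Set.uIoc c d : Set ℝ) = Ioc (min c d) (max c d) from rfl, key, smul_comm]

/-- Fundamental identity for the initial functional: with `h w` the `h`-curve
parameter for displacement `w` between times `τ` and `t`,
`∫_τ^t e^{-β θ} f*(f'(h(x-y) e^{β θ})) dθ
  = -∫_x^y h(x-z) dz - ∫_τ^t e^{-β θ} f(h(0) e^{β θ}) dθ`. -/
theorem initial_functional_identity (f β h : ℝ → ℝ)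
    (hf : ContDiff ℝ 2 f)
    (hconv : StrictConvexOn ℝ Set.univ f)
    (hsuper : Tendsto (fun u => f u / |u|) (cocompact ℝ) atTop)
    (hβ : Continuous β)
    (x y t τ : ℝ) (hτ : 0 ≤ τ) (ht : τ < t)
    (hh : ∀ w : ℝ, w = ∫ θ in τ..t, deriv f (h w * Real.exp (β θ)))
    (hhC1 : ContDiff ℝ 1 h) :
    (∫ θ in τ..t,
      Real.exp (-β θ) * conjFn f (deriv f (h (x - y) * Real.exp (β θ)))) =
      -(∫ z in x..y, h (x - z)) -
        ∫ θ in τ..t, Real.exp (-β θ) * f (h 0 * Real.exp (β θ)) := by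
  set w : ℝ := x - y with hwdef
  have hfd : Differentiable ℝ f := hf.differentiable (by norm_num)
  have hfc : Continuous f := hf.continuous
  have hf' : Continuous (deriv f) := hf.continuous_deriv one_le_two
  have hhc : Continuous h := hhC1.continuous
  have hh'c : Continuous (deriv h) := hhC1.continuous_deriv le_rfl
  have hhd : Differentiable ℝ h := hhC1.differentiable (by norm_num)
  have hexp : Continuous fun θ : ℝ => Real.exp (β θ) := Real.continuous_exp.comp hβ
  have hexpn : Continuous fun θ : ℝ => Real.exp (-β θ) := Real.continuous_exp.comp hβ.neg
  -- continuity helpers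
  have cf' : ∀ s : ℝ, Continuous fun θ => deriv f (h s * Real.exp (β θ)) :=
    fun s => hf'.comp (continuous_const.mul hexp)
  have cG : ∀ s : ℝ, Continuous fun θ => Real.exp (-β θ) * f (h s * Real.exp (β θ)) :=
    fun s => hexpn.mul (hfc.comp (continuous_const.mul hexp))
  -- the function g and its joint continuity
  set g : ℝ → ℝ → ℝ := fun s θ => deriv h s * deriv f (h s * Real.exp (β θ)) with hgdef
  have hgcont : Continuous fun p : ℝ × ℝ => g p.1 p.2 := by
    exact (hh'c.comp continuous_fst).mul
      (hf'.comp ((hhc.comp continuous_fst).mul (hexp.comp continuous_snd)))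
  have cgθ : ∀ s : ℝ, Continuous fun θ => g s θ :=
    fun s => hgcont.comp (Continuous.prodMk_right s)
  have cgs : ∀ θ : ℝ, Continuous fun s => g s θ :=
    fun θ => hgcont.comp (Continuous.prodMk_left θ)
  -- G
  set G : ℝ → ℝ := fun s => ∫ θ in τ..t, Real.exp (-β θ) * f (h s * Real.exp (β θ)) with hGdef
  -- Step 1: duality rewrite of the LHS
  have hdual : ∀ θ : ℝ, Real.exp (-β θ) * conjFn f (deriv f (h w * Real.exp (β θ)))
      = h w * deriv f (h w * Real.exp (β θ)) - Real.exp (-β θ) * f (h w * Real.exp (β θ)) := by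
    intro θ
    rw [conjFn_deriv_s13 hfd hconv.convexOn]
    have he : Real.exp (-β θ) * Real.exp (β θ) = 1 := by
      rw [← Real.exp_add]; simp
    linear_combination (h w * deriv f (h w * Real.exp (β θ))) * he
  have hLHS : (∫ θ in τ..t, Real.exp (-β θ) * conjFn f (deriv f (h w * Real.exp (β θ))))
      = h w * w - G w := by
    have h1 : (∫ θ in τ..t, Real.exp (-β θ) * conjFn f (deriv f (h w * Real.exp (β θ))))
        = ∫ θ in τ..t, (h w * deriv f (h w * Real.exp (β θ))
            - Real.exp (-β θ) * f (h w * Real.exp (β θ))) := by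
      apply intervalIntegral.integral_congr
      intro θ _; exact hdual θ
    rw [h1, intervalIntegral.integral_sub (f := fun θ => h w * deriv f (h w * Real.exp (β θ)))
      ((continuous_const.mul (cf' w)).intervalIntegrable _ _)
      ((cG w).intervalIntegrable _ _),
      intervalIntegral.integral_const_mul, ← hh w]
  -- Step 2: inner FTC in s
  have inner : ∀ θ : ℝ, (∫ s in (0:ℝ)..w, g s θ)
      = Real.exp (-β θ) * f (h w * Real.exp (β θ))
        - Real.exp (-β θ) * f (h 0 * Real.exp (β θ)) := by
    intro θ
    have hder : ∀ s ∈ uIcc (0:ℝ) w,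
        HasDerivAt (fun s => Real.exp (-β θ) * f (h s * Real.exp (β θ))) (g s θ) s := by
      intro s _
      have h1 : HasDerivAt (fun s => h s * Real.exp (β θ)) (deriv h s * Real.exp (β θ)) s :=
        (hhd s).hasDerivAt.mul_const _
      have h2 : HasDerivAt (fun s => f (h s * Real.exp (β θ)))
          (deriv f (h s * Real.exp (β θ)) * (deriv h s * Real.exp (β θ))) s :=
        (hfd _).hasDerivAt.comp s h1
      have h3 := h2.const_mul (Real.exp (-β θ))
      have he : Real.exp (-β θ) * Real.exp (β θ) = 1 := by
        rw [← Real.exp_add]; simp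
      have : Real.exp (-β θ) * (deriv f (h s * Real.exp (β θ)) * (deriv h s * Real.exp (β θ)))
          = g s θ := by
        rw [hgdef]
        linear_combination (deriv f (h s * Real.exp (β θ)) * deriv h s) * he
      rwa [this] at h3
    exact intervalIntegral.integral_eq_sub_of_hasDerivAt hder ((cgs θ).intervalIntegrable _ _)
  -- Step 3: G w - G 0 via swap
  have hGsub : (∫ θ in τ..t, (∫ s in (0:ℝ)..w, g s θ)) = G w - G 0 := by
    have h1 : (∫ θ in τ..t, (∫ s in (0:ℝ)..w, g s θ))
        = ∫ θ in τ..t, (Real.exp (-β θ) * f (h w * Real.exp (β θ))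
            - Real.exp (-β θ) * f (h 0 * Real.exp (β θ))) := by
      apply intervalIntegral.integral_congr
      intro θ _; exact inner θ
    rw [h1, intervalIntegral.integral_sub ((cG w).intervalIntegrable _ _)
      ((cG 0).intervalIntegrable _ _)]
  have hswap : (∫ θ in τ..t, (∫ s in (0:ℝ)..w, g s θ))
      = ∫ s in (0:ℝ)..w, (∫ θ in τ..t, g s θ) := by
    exact my_interval_swap (F := fun θ s => g s θ)
      (by exact hgcont.comp (continuous_snd.prodMk continuous_fst)) τ t 0 w
  -- Step 4: inner θ-integral
  have hθint : ∀ s : ℝ, (∫ θ in τ..t, g s θ) = deriv h s * s := by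
    intro s
    rw [hgdef]
    simp only []
    rw [intervalIntegral.integral_const_mul, ← hh s]
  -- Step 5: ∫_0^w s h'(s) ds = h w * w - ∫_0^w h
  have hstep5 : (∫ s in (0:ℝ)..w, deriv h s * s) = h w * w - ∫ s in (0:ℝ)..w, h s := by
    have hder : ∀ s ∈ uIcc (0:ℝ) w,
        HasDerivAt (fun s => h s * s) (deriv h s * s + h s) s := by
      intro s _
      have : HasDerivAt (fun s => h s * s) (deriv h s * s + h s * 1) s :=
        (hhd s).hasDerivAt.mul (hasDerivAt_id' s)
      simpa using this
    have i1 : IntervalIntegrable (fun s : ℝ => deriv h s * s) MeasureTheory.volume 0 w :=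
      (hh'c.mul continuous_id).intervalIntegrable _ _
    have i2 : IntervalIntegrable h MeasureTheory.volume 0 w := hhc.intervalIntegrable _ _
    have hFTC := intervalIntegral.integral_eq_sub_of_hasDerivAt hder (i1.add i2)
    rw [intervalIntegral.integral_add i1 i2] at hFTC
    simp only [mul_zero, sub_zero] at hFTC
    linarith
  -- Step 6: RHS rewrite
  have hRHS : (∫ z in x..y, h (x - z)) = - ∫ s in (0:ℝ)..w, h s := by
    rw [intervalIntegral.integral_comp_sub_left h x]
    rw [show x - x = (0:ℝ) by ring, ← hwdef]
    exact intervalIntegral.integral_symm 0 w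
  -- assemble
  rw [hLHS, hRHS]
  have e1 : G w - G 0 = ∫ s in (0:ℝ)..w, deriv h s * s := by
    rw [← hGsub, hswap]
    apply intervalIntegral.integral_congr
    intro s _; exact hθint s
  rw [hstep5] at e1
  have : (∫ θ in τ..t, Real.exp (-β θ) * f (h 0 * Real.exp (β θ))) = G 0 := rfl
  rw [this]
  linarith
end
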